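/- arXiv:2105.07329 — 2 statements merged into one kernel-verified Lean document; each statement's English description precedes it below -/
import Mathlib

section
/- Let m ≥ 2 points be at arbitrary (fixed) locations in the unit cube [0,1]^d, and let X be uniformly distributed on [0,1]^d. Then there exists a constant ε = ε(d) > 0, independent of m and of the point locations, such that the expected distance from X to the nearest of the m points is at least ε / m^(1/d). -/
open MeasureTheory

/-- Coordinate distance is at most Euclidean distance. -/
lemma enn_coord_dist_le {d : ℕ} (x y : EuclideanSpace ℝ (Fin d)) (j : Fin d) :
    dist (x j) (y j) ≤ dist x y := by
  rw [EuclideanSpace.dist_eq]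
  have h1 : dist (x j) (y j) ^ 2 ≤ ∑ i, dist (x i) (y i) ^ 2 :=
    Finset.single_le_sum (f := fun i => dist (x i) (y i) ^ 2)
      (fun i _ => sq_nonneg _) (Finset.mem_univ j)
  calc dist (x j) (y j) = Real.sqrt (dist (x j) (y j) ^ 2) :=
        (Real.sqrt_sq dist_nonneg).symm
    _ ≤ Real.sqrt (∑ i, dist (x i) (y i) ^ 2) := Real.sqrt_le_sqrt h1

lemma enn_box_eq {d : ℕ} (a b : Fin d → ℝ) :
    {x : EuclideanSpace ℝ (Fin d) | ∀ j, x j ∈ Set.Icc (a j) (b j)} =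
      (MeasurableEquiv.toLp 2 (Fin d → ℝ)).symm ⁻¹'
        (Set.univ.pi fun j => Set.Icc (a j) (b j)) := by
  ext x
  simp only [Set.mem_setOf_eq, Set.mem_preimage, Set.mem_pi, Set.mem_univ, Set.mem_Icc,
    forall_const]
  constructor
  · intro h j; exact h j
  · intro h j; exact h j

lemma enn_vol_box {d : ℕ} (a b : Fin d → ℝ) :
    volume {x : EuclideanSpace ℝ (Fin d) | ∀ j, x j ∈ Set.Icc (a j) (b j)} =
      ∏ j, ENNReal.ofReal (b j - a j) := by
  rw [enn_box_eq,
    (EuclideanSpace.volume_preserving_symm_measurableEquiv_toLp (Fin d)).measure_preimage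
      ((MeasurableSet.univ_pi fun j => measurableSet_Icc).nullMeasurableSet),
    volume_pi_pi]
  simp [Real.volume_Icc]

lemma enn_box_measurable {d : ℕ} (a b : Fin d → ℝ) :
    MeasurableSet {x : EuclideanSpace ℝ (Fin d) | ∀ j, x j ∈ Set.Icc (a j) (b j)} := by
  rw [enn_box_eq]
  exact (MeasurableEquiv.toLp 2 (Fin d → ℝ)).symm.measurable
    (MeasurableSet.univ_pi fun j => measurableSet_Icc)

lemma enn_box_compact {d : ℕ} (a b : Fin d → ℝ) :
    IsCompact {x : EuclideanSpace ℝ (Fin d) | ∀ j, x j ∈ Set.Icc (a j) (b j)} := by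
  have h : {x : EuclideanSpace ℝ (Fin d) | ∀ j, x j ∈ Set.Icc (a j) (b j)} =
      (PiLp.continuousLinearEquiv 2 ℝ (fun _ : Fin d => ℝ)).toHomeomorph ⁻¹'
        (Set.univ.pi fun j => Set.Icc (a j) (b j)) := by
    ext x
    simp only [Set.mem_setOf_eq, Set.mem_preimage, Set.mem_pi, Set.mem_univ, Set.mem_Icc,
      forall_const]
    constructor
    · intro h j; exact h j
    · intro h j; exact h j
  rw [h, Homeomorph.isCompact_preimage]
  exact isCompact_univ_pi fun j => isCompact_Icc

/-- For m ≥ 2 points at arbitrary fixed locations in the unit cube `[0,1]^d`, with `X`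
uniform on the cube, the expected distance from `X` to the nearest point is at least
`ε / m^(1/d)` for a constant `ε = ε(d) > 0` independent of `m` and the point locations. -/
theorem expected_nearest_neighbor_lower_bound (d : ℕ) (hd : 1 ≤ d) :
    ∃ ε : ℝ, 0 < ε ∧ ∀ (m : ℕ), 2 ≤ m →
      ∀ p : Fin m → EuclideanSpace ℝ (Fin d),
        (∀ i, ∀ j : Fin d, p i j ∈ Set.Icc (0:ℝ) 1) →
        ε / (m : ℝ) ^ ((1:ℝ) / d) ≤
          ∫ x in {x : EuclideanSpace ℝ (Fin d) | ∀ j, x j ∈ Set.Icc (0:ℝ) 1},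
            (⨅ i, dist x (p i)) ∂volume := by
  refine ⟨1/8, by norm_num, fun m hm p hp => ?_⟩
  haveI : Nonempty (Fin m) := ⟨⟨0, by omega⟩⟩
  have hd0 : (d:ℝ) ≠ 0 := Nat.cast_ne_zero.mpr (by omega)
  have hm0 : (0:ℝ) < (m:ℝ) := by exact_mod_cast Nat.lt_of_lt_of_le (by norm_num) hm
  set M : ℝ := (m : ℝ) ^ ((1:ℝ) / d) with hMdef
  have hM : 0 < M := Real.rpow_pos_of_pos hm0 _
  have hMd : M ^ d = (m:ℝ) := by
    rw [hMdef, ← Real.rpow_natCast ((m:ℝ) ^ ((1:ℝ)/d)) d, ← Real.rpow_mul hm0.le,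
      one_div_mul_cancel hd0, Real.rpow_one]
  set t : ℝ := 1 / (4 * M) with htdef
  have ht : 0 < t := by positivity
  set S : Set (EuclideanSpace ℝ (Fin d)) := {x | ∀ j, x j ∈ Set.Icc (0:ℝ) 1} with hSdef
  set f : EuclideanSpace ℝ (Fin d) → ℝ := fun x => ⨅ i, dist x (p i) with hfdef
  -- basic facts
  have hSmeas : MeasurableSet S := enn_box_measurable (fun _ => 0) (fun _ => 1)
  have hScompact : IsCompact S := enn_box_compact (fun _ => 0) (fun _ => 1)
  have hvolS : volume S = 1 := by
    rw [hSdef, enn_vol_box (fun _ => 0) (fun _ => 1)]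
    simp
  have hf0 : ∀ x, 0 ≤ f x := fun x => le_ciInf fun i => dist_nonneg
  have hfcont : Continuous f := by
    have h : f = fun x => Finset.univ.inf' Finset.univ_nonempty (fun i => dist x (p i)) := by
      funext x
      rw [Finset.inf'_univ_eq_ciInf]
    rw [h]
    exact Continuous.finset_inf'_apply _ fun i _ => Continuous.dist continuous_id continuous_const
  have hint : IntegrableOn f S := hfcont.continuousOn.integrableOn_compact hScompact
  -- the union of balls
  set U : Set (EuclideanSpace ℝ (Fin d)) := ⋃ i, Metric.ball (p i) t with hUdef
  have hUmeas : MeasurableSet U := MeasurableSet.iUnion fun i => measurableSet_ball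
  set T : Set (EuclideanSpace ℝ (Fin d)) := S ∩ Uᶜ with hTdef
  have hTmeas : MeasurableSet T := hSmeas.inter hUmeas.compl
  have hTS : T ⊆ S := Set.inter_subset_left
  have hTfin : volume T ≠ ⊤ := by
    refine ne_of_lt (lt_of_le_of_lt (measure_mono hTS) ?_)
    rw [hvolS]; exact ENNReal.one_lt_top
  -- on T, f ≥ t
  have hft : ∀ x ∈ T, t ≤ f x := by
    intro x hx
    refine le_ciInf fun i => ?_
    have hxU : x ∉ U := hx.2
    by_contra h
    exact hxU (Set.mem_iUnion.mpr ⟨i, Metric.mem_ball.mpr (by simpa [dist_comm] using not_le.mp h)⟩)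
  -- volume of each ball
  have hball : ∀ i, volume (Metric.ball (p i) t) ≤ ENNReal.ofReal ((2*t)^d) := by
    intro i
    have hsub : Metric.ball (p i) t ⊆
        {x : EuclideanSpace ℝ (Fin d) | ∀ j, x j ∈ Set.Icc (p i j - t) (p i j + t)} := by
      intro y hy j
      have h1 : dist (y j) (p i j) ≤ dist y (p i) := enn_coord_dist_le y (p i) j
      have h2 : dist y (p i) < t := Metric.mem_ball.mp hy
      have h3 : |y j - p i j| ≤ t := by
        rw [← Real.dist_eq]; exact h1.trans h2.le
      rw [abs_le] at h3
      constructor <;> linarith [h3.1, h3.2]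
    calc volume (Metric.ball (p i) t) ≤
        volume {x : EuclideanSpace ℝ (Fin d) | ∀ j, x j ∈ Set.Icc (p i j - t) (p i j + t)} :=
          measure_mono hsub
      _ = ∏ _j : Fin d, ENNReal.ofReal (2*t) := by
          rw [enn_vol_box]
          congr 1
          funext j
          ring_nf
      _ = ENNReal.ofReal ((2*t)^d) := by
          rw [Finset.prod_const, Finset.card_univ, Fintype.card_fin,
            ← ENNReal.ofReal_pow (by positivity)]
  -- volume of U
  have hvolU : volume U ≤ ENNReal.ofReal (1/2) := by
    have hreal : (m:ℝ) * (2*t)^d ≤ 1/2 := by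
      have h2t : 2 * t = 1 / (2 * M) := by
        rw [htdef]; field_simp; ring
      have : (2*t)^d = 1 / (2^d * (m:ℝ)) := by
        rw [h2t, div_pow, one_pow, mul_pow, hMd]
      rw [this]
      have h2d : (2:ℝ) ≤ 2^d := by
        calc (2:ℝ) = 2^1 := (pow_one 2).symm
          _ ≤ 2^d := pow_le_pow_right₀ (by norm_num) hd
      have heq : (m:ℝ) * (1/(2^d*(m:ℝ))) = 1/2^d := by field_simp
      rw [heq]
      exact one_div_le_one_div_of_le (by norm_num) h2d
    calc volume U ≤ ∑' i : Fin m, volume (Metric.ball (p i) t) := measure_iUnion_le _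
      _ = ∑ i : Fin m, volume (Metric.ball (p i) t) := tsum_fintype _
      _ ≤ ∑ _i : Fin m, ENNReal.ofReal ((2*t)^d) := Finset.sum_le_sum fun i _ => hball i
      _ = (m : ENNReal) * ENNReal.ofReal ((2*t)^d) := by
          rw [Finset.sum_const, Finset.card_univ, Fintype.card_fin, nsmul_eq_mul]
      _ = ENNReal.ofReal ((m:ℝ) * (2*t)^d) := by
          rw [← ENNReal.ofReal_natCast m, ← ENNReal.ofReal_mul (Nat.cast_nonneg m)]
      _ ≤ ENNReal.ofReal (1/2) := ENNReal.ofReal_le_ofReal hreal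
  -- volume of T
  have hvolT : ENNReal.ofReal (1/2) ≤ volume T := by
    have h1 : volume S ≤ volume T + volume U := by
      calc volume S ≤ volume (T ∪ U) := measure_mono (by
            intro x hx
            by_cases hxU : x ∈ U
            · exact Or.inr hxU
            · exact Or.inl ⟨hx, hxU⟩)
        _ ≤ volume T + volume U := measure_union_le _ _
    have h2 : (1:ENNReal) ≤ volume T + ENNReal.ofReal (1/2) :=
      hvolS ▸ (h1.trans (add_le_add_right hvolU _))
    have h3 : (1:ENNReal) - ENNReal.ofReal (1/2) ≤ volume T := tsub_le_iff_right.mpr h2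
    calc ENNReal.ofReal (1/2) = 1 - ENNReal.ofReal (1/2) := by
          rw [← ENNReal.ofReal_one, ← ENNReal.ofReal_sub _ (by norm_num)]
          norm_num
      _ ≤ volume T := h3
  have hvolT' : (1:ℝ)/2 ≤ (volume T).toReal := by
    calc (1:ℝ)/2 = (ENNReal.ofReal (1/2)).toReal := by
          rw [ENNReal.toReal_ofReal (by norm_num)]
      _ ≤ (volume T).toReal := ENNReal.toReal_mono hTfin hvolT
  -- main chain
  calc (1/8 : ℝ) / M = t * (1/2) := by
        rw [htdef]; field_simp; ring
    _ ≤ t * (volume T).toReal := by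
        exact mul_le_mul_of_nonneg_left hvolT' ht.le
    _ ≤ ∫ x in T, f x ∂volume :=
        setIntegral_ge_of_const_le_real hTmeas hTfin hft (hint.mono_set hTS)
    _ ≤ ∫ x in S, f x ∂volume := by
        refine setIntegral_mono_set hint ?_ (HasSubset.Subset.eventuallyLE hTS)
        exact Filter.Eventually.of_forall fun x => hf0 x
end

section
/- Let X ~ Binomial(N+M, p) and Y_t ~ Binomial(t, p) with Y_t obtained as partial sums of i.i.d. Bernoulli(p) variables independent of X, where M ≤ N and M ≥ √(19 N / p). Then for every t < N, Pr(Y_t ≥ X) ≤ 2 exp(−(N+M−t)² p / (19 N)). -/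
open Finset

/-- The probability that a Binomial(n,p) variable equals k. -/
noncomputable def binomPMF (n : ℕ) (p : ℝ) (k : ℕ) : ℝ :=
  (n.choose k : ℝ) * p ^ k * (1 - p) ^ (n - k)

lemma exp_le_quad {x : ℝ} (hx : |x| ≤ 1) : Real.exp x ≤ 1 + x + x ^ 2 := by
  have h := Real.exp_bound hx (n := 3) (by norm_num)
  have h1 := (abs_sub_le_iff.1 h).1
  have hs : ∑ m ∈ range 3, x ^ m / m.factorial = 1 + x + x ^ 2 / 2 := by
    norm_num [Finset.sum_range_succ, Nat.factorial]
  rw [hs] at h1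
  have hx3 : |x| ^ 3 ≤ x ^ 2 := by
    have : |x| ^ 3 = |x| * x ^ 2 := by rw [← sq_abs]; ring
    nlinarith [abs_nonneg x, sq_nonneg x]
  have : (3:ℕ).succ / ((3:ℕ).factorial * 3 : ℝ) = 2/9 := by norm_num [Nat.factorial]
  nlinarith [sq_nonneg x]

lemma mgf_binom (n : ℕ) (p a : ℝ) :
    ∑ k ∈ range (n + 1), binomPMF n p k * a ^ k = (1 - p + p * a) ^ n := by
  simp only [binomPMF]
  have := add_pow (p * a) (1 - p) n
  rw [show (1 : ℝ) - p + p * a = p * a + (1 - p) by ring, this]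
  apply Finset.sum_congr rfl
  intro k _
  rw [mul_pow]
  ring

lemma binomPMF_nonneg {n : ℕ} {p : ℝ} (h0 : 0 ≤ p) (h1 : p ≤ 1) (k : ℕ) :
    0 ≤ binomPMF n p k := by
  unfold binomPMF
  have h2 : (0:ℝ) ≤ 1 - p := by linarith
  positivity

/-- For independent `X ~ Binomial(N+M, p)` and `Y_t ~ Binomial(t, p)`, with `M ≤ N` and
`M ≥ √(19 N / p)`, for every `t < N` we have
`Pr(Y_t ≥ X) ≤ 2 exp(−(N+M−t)² p / (19 N))`. -/
theorem prob_demand_exceeds_supply (N M t : ℕ) (p : ℝ)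
    (hp0 : 0 < p) (hp1 : p ≤ 1) (hMN : M ≤ N)
    (hM : Real.sqrt (19 * N / p) ≤ M) (ht : t < N) :
    (∑ x ∈ Finset.range (N + M + 1), ∑ y ∈ Finset.range (t + 1),
        binomPMF (N + M) p x * binomPMF t p y * (if (x : ℕ) ≤ y then (1:ℝ) else 0))
      ≤ 2 * Real.exp (-(((N : ℝ) + M - t) ^ 2 * p / (19 * N))) := by
  obtain ⟨nr, hnr⟩ : ∃ x : ℝ, x = (N : ℝ) + M := ⟨_, rfl⟩
  obtain ⟨tr, htr⟩ : ∃ x : ℝ, x = (t : ℝ) := ⟨_, rfl⟩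
  obtain ⟨D, hD⟩ : ∃ x : ℝ, x = nr - tr := ⟨_, rfl⟩
  obtain ⟨Q, hQ⟩ : ∃ x : ℝ, x = nr + tr := ⟨_, rfl⟩
  have hN1 : (1 : ℝ) ≤ N := by exact_mod_cast Nat.one_le_iff_ne_zero.2 (Nat.pos_of_ne_zero (by omega)).ne'
  have htN : tr < (N : ℝ) := by rw [htr]; exact_mod_cast ht
  have hMnn : (0:ℝ) ≤ M := Nat.cast_nonneg M
  have hMNr : (M:ℝ) ≤ N := by exact_mod_cast hMN
  have hDpos : 0 < D := by rw [hD, hnr, htr]; push_cast; linarith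
  have hQpos : 0 < Q := by rw [hQ, hnr, htr]; positivity
  obtain ⟨s, hs⟩ : ∃ x : ℝ, x = D / (2 * Q) := ⟨_, rfl⟩
  have hspos : 0 < s := by rw [hs]; exact div_pos hDpos (by linarith)
  have hsQ : s * (2 * Q) = D := by rw [hs]; field_simp
  have hshalf : s ≤ 1/2 := by
    rw [hs, div_le_iff₀ (by linarith)]
    rw [hD, hQ]
    nlinarith [htr ▸ Nat.cast_nonneg t]
  have hs1 : |s| ≤ 1 := by rw [abs_of_pos hspos]; linarith
  have hs1' : |(-s)| ≤ 1 := by rw [abs_neg]; exact hs1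
  -- step 1: bound indicator by exponential, termwise
  have step1 : (∑ x ∈ Finset.range (N + M + 1), ∑ y ∈ Finset.range (t + 1),
        binomPMF (N + M) p x * binomPMF t p y * (if (x : ℕ) ≤ y then (1:ℝ) else 0))
      ≤ ∑ x ∈ Finset.range (N + M + 1), ∑ y ∈ Finset.range (t + 1),
        (binomPMF (N + M) p x * Real.exp (-s) ^ x) * (binomPMF t p y * Real.exp s ^ y) := by
    apply Finset.sum_le_sum
    intro x _
    apply Finset.sum_le_sum
    intro y _
    have hP : 0 ≤ binomPMF (N + M) p x * binomPMF t p y :=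
      mul_nonneg (binomPMF_nonneg hp0.le hp1 x) (binomPMF_nonneg hp0.le hp1 y)
    have key : (if (x : ℕ) ≤ y then (1:ℝ) else 0) ≤ Real.exp (-s) ^ x * Real.exp s ^ y := by
      split_ifs with hxy
      · rw [← Real.exp_nat_mul, ← Real.exp_nat_mul, ← Real.exp_add]
        rw [← Real.exp_zero]
        apply Real.exp_le_exp.2
        have : (x : ℝ) ≤ y := by exact_mod_cast hxy
        nlinarith
      · positivity
    calc binomPMF (N + M) p x * binomPMF t p y * (if (x : ℕ) ≤ y then (1:ℝ) else 0)
        ≤ binomPMF (N + M) p x * binomPMF t p y * (Real.exp (-s) ^ x * Real.exp s ^ y) :=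
          mul_le_mul_of_nonneg_left key hP
      _ = (binomPMF (N + M) p x * Real.exp (-s) ^ x) * (binomPMF t p y * Real.exp s ^ y) := by
          ring
  -- step 2: factorize and compute MGFs
  have step2 : ∑ x ∈ Finset.range (N + M + 1), ∑ y ∈ Finset.range (t + 1),
        (binomPMF (N + M) p x * Real.exp (-s) ^ x) * (binomPMF t p y * Real.exp s ^ y)
      = (1 - p + p * Real.exp (-s)) ^ (N + M) * (1 - p + p * Real.exp s) ^ t := by
    rw [← Finset.sum_mul_sum, mgf_binom, mgf_binom]
  -- step 3: bound bases by exponentials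
  have base1 : (0:ℝ) ≤ 1 - p + p * Real.exp (-s) := by
    nlinarith [Real.exp_pos (-s)]
  have base2 : (0:ℝ) ≤ 1 - p + p * Real.exp s := by
    nlinarith [Real.exp_pos s]
  have hb1 : 1 - p + p * Real.exp (-s) ≤ Real.exp (p * (Real.exp (-s) - 1)) := by
    have := Real.add_one_le_exp (p * (Real.exp (-s) - 1))
    linarith
  have hb2 : 1 - p + p * Real.exp s ≤ Real.exp (p * (Real.exp s - 1)) := by
    have := Real.add_one_le_exp (p * (Real.exp s - 1))
    linarith
  have step3 : (1 - p + p * Real.exp (-s)) ^ (N + M) * (1 - p + p * Real.exp s) ^ t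
      ≤ Real.exp ((N + M : ℕ) * (p * (Real.exp (-s) - 1)) + (t : ℝ) * (p * (Real.exp s - 1))) := by
    rw [Real.exp_add, Real.exp_nat_mul, Real.exp_nat_mul]
    exact mul_le_mul (pow_le_pow_left₀ base1 hb1 _) (pow_le_pow_left₀ base2 hb2 _)
      (pow_nonneg base2 _) (pow_nonneg (Real.exp_nonneg _) _)
  -- step 4: the exponent inequality
  have e1 : Real.exp (-s) - 1 ≤ -s + s ^ 2 := by
    have h := exp_le_quad hs1'
    have h2 : (1:ℝ) + (-s) + (-s) ^ 2 = 1 - s + s ^ 2 := by ring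
    linarith
  have e2 : Real.exp s - 1 ≤ s + s ^ 2 := by
    have := exp_le_quad hs1
    linarith
  have hcast : ((N + M : ℕ) : ℝ) = nr := by rw [hnr]; push_cast; ring
  have h4Q : 4 * Q ≤ 19 * N := by
    rw [hQ, hnr, htr]
    have h0t : (0:ℝ) ≤ (t:ℝ) := Nat.cast_nonneg t
    linarith
  have step4 : ((N + M : ℕ) : ℝ) * (p * (Real.exp (-s) - 1)) + (t : ℝ) * (p * (Real.exp s - 1))
      ≤ -(D ^ 2 * p / (19 * N)) := by
    rw [hcast, show ((t:ℕ):ℝ) = tr from htr.symm]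
    have hnr0 : 0 ≤ nr := by rw [hnr]; positivity
    have htr0 : (0:ℝ) ≤ tr := htr ▸ Nat.cast_nonneg t
    have hnrp : 0 ≤ nr * p := mul_nonneg hnr0 hp0.le
    have htrp : 0 ≤ tr * p := mul_nonneg htr0 hp0.le
    have h1 : nr * (p * (Real.exp (-s) - 1)) ≤ nr * p * (-s + s ^ 2) := by
      calc nr * (p * (Real.exp (-s) - 1)) = nr * p * (Real.exp (-s) - 1) := by ring
        _ ≤ nr * p * (-s + s ^ 2) := mul_le_mul_of_nonneg_left e1 hnrp
    have h2 : tr * (p * (Real.exp s - 1)) ≤ tr * p * (s + s ^ 2) := by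
      calc tr * (p * (Real.exp s - 1)) = tr * p * (Real.exp s - 1) := by ring
        _ ≤ tr * p * (s + s ^ 2) := mul_le_mul_of_nonneg_left e2 htrp
    have hmid : nr * p * (-s + s ^ 2) + tr * p * (s + s ^ 2) = -(p * Q * s ^ 2) := by
      have hDval : D = 2 * Q * s := by rw [← hsQ]; ring
      have hsum : nr = (Q + D)/2 := by rw [hQ, hD]; ring
      have hdiff : tr = (Q - D)/2 := by rw [hQ, hD]; ring
      rw [hsum, hdiff, hDval]
      ring
    have hfin : D ^ 2 * p / (19 * N) ≤ p * Q * s ^ 2 := by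
      rw [div_le_iff₀ (by positivity)]
      have hDval : D = 2 * Q * s := by rw [← hsQ]; ring
      rw [hDval]
      have hint : 0 ≤ p * Q * s ^ 2 * (19 * N - 4 * Q) :=
        mul_nonneg (by positivity) (by linarith)
      have key : p * Q * s ^ 2 * (19 * (N:ℝ)) - (2 * Q * s) ^ 2 * p
          = p * Q * s ^ 2 * (19 * N - 4 * Q) := by ring
      linarith
    linarith
  -- combine
  have hDeq : D = (N : ℝ) + M - t := by rw [hD, hnr, htr]
  calc (∑ x ∈ Finset.range (N + M + 1), ∑ y ∈ Finset.range (t + 1),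
        binomPMF (N + M) p x * binomPMF t p y * (if (x : ℕ) ≤ y then (1:ℝ) else 0))
      ≤ ∑ x ∈ Finset.range (N + M + 1), ∑ y ∈ Finset.range (t + 1),
        (binomPMF (N + M) p x * Real.exp (-s) ^ x) * (binomPMF t p y * Real.exp s ^ y) := step1
    _ = (1 - p + p * Real.exp (-s)) ^ (N + M) * (1 - p + p * Real.exp s) ^ t := step2
    _ ≤ Real.exp ((N + M : ℕ) * (p * (Real.exp (-s) - 1)) + (t : ℝ) * (p * (Real.exp s - 1))) := step3
    _ ≤ Real.exp (-(D ^ 2 * p / (19 * N))) := Real.exp_le_exp.2 step4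
    _ = Real.exp (-(((N : ℝ) + M - t) ^ 2 * p / (19 * N))) := by rw [hDeq]
    _ ≤ 2 * Real.exp (-(((N : ℝ) + M - t) ^ 2 * p / (19 * N))) := by
        linarith [Real.exp_pos (-(((N : ℝ) + M - t) ^ 2 * p / (19 * N)))]
end
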